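/- In the setup of two homogeneous compressed Gorenstein ideals I1, I2 in the power series ring in e ≥ 3 variables with R = Q/(I1 ∩ I2) compressed of type 2: if the socle degrees satisfy s1 = 2, or s1 = 3 = s2, then Q/(I1 + I2) = Q/q^2. -/

import Mathlib

open MvPolynomial

/-- The ideal generated by the variables (the graded maximal ideal `q`). -/
noncomputable def qIdeal (k : Type*) [Field k] (e : ℕ) : Ideal (MvPolynomial (Fin e) k) :=
  Ideal.span (Set.range X)

/-- The Hilbert function of `Q/J`: `h(i) = dim_k (q^i + J)/(q^{i+1} + J)`. -/
noncomputable def hilb (k : Type*) [Field k] (e : ℕ)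
    (J : Ideal (MvPolynomial (Fin e) k)) (i : ℕ) : ℕ :=
  Module.finrank k
    (((qIdeal k e ^ i ⊔ J).map (Ideal.Quotient.mk (qIdeal k e ^ (i + 1) ⊔ J))).restrictScalars k)

/-- An ideal is homogeneous if it is generated by homogeneous polynomials. -/
def IsHomogeneousIdeal (k : Type*) [Field k] (e : ℕ)
    (J : Ideal (MvPolynomial (Fin e) k)) : Prop :=
  ∃ S : Set (MvPolynomial (Fin e) k),
    (∀ p ∈ S, ∃ n, MvPolynomial.IsHomogeneous p n) ∧ J = Ideal.span S

/-- Hilbert function of the ambient ring: `h_Q(i) = binom(e−1+i, e−1)`. -/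
def hQ (e i : ℕ) : ℕ := Nat.choose (e - 1 + i) (e - 1)

/-- `h_Q(σ − i)`, interpreted as `0` for `i > σ`. -/
def hQat (e σ i : ℕ) : ℕ := if i ≤ σ then hQ e (σ - i) else 0

/-- `Q/J` has type 1 (is artinian Gorenstein): the socle `(J : q)/J` is spanned
by one nonzero element. -/
def HasTypeOne (k : Type*) [Field k] (e : ℕ) (J : Ideal (MvPolynomial (Fin e) k)) : Prop :=
  ∃ x, x ∉ J ∧ J.colon (qIdeal k e) = J ⊔ Ideal.span {x}

/-- `Q/J` has type 2: the socle `(J : q)/J` is spanned by two elements whose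
cosets are linearly independent over `k`. -/
def HasTypeTwo (k : Type*) [Field k] (e : ℕ) (J : Ideal (MvPolynomial (Fin e) k)) : Prop :=
  ∃ x y, J.colon (qIdeal k e) = J ⊔ Ideal.span {x, y} ∧
    ∀ a b : MvPolynomial (Fin e) k, a * x + b * y ∈ J →
      a ∈ qIdeal k e ∧ b ∈ qIdeal k e

/-- `σ` is the socle degree of `Q/J`. -/
def SocDeg (k : Type*) [Field k] (e : ℕ) (J : Ideal (MvPolynomial (Fin e) k)) (σ : ℕ) : Prop :=
  ¬ qIdeal k e ^ σ ≤ J ∧ qIdeal k e ^ (σ + 1) ≤ J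

/-- `τ` is the initial degree of `J`. -/
def IniDeg (k : Type*) [Field k] (e : ℕ) (J : Ideal (MvPolynomial (Fin e) k)) (τ : ℕ) : Prop :=
  J ≤ qIdeal k e ^ τ ∧ ¬ J ≤ qIdeal k e ^ (τ + 1)

/-- `Q/J` is a compressed Gorenstein ring of socle degree `σ`. -/
def CompressedGor (k : Type*) [Field k] (e : ℕ) (J : Ideal (MvPolynomial (Fin e) k)) (σ : ℕ) : Prop :=
  ∀ i, hilb k e J i = min (hQ e i) (hQat e σ i)


namespace Stmt14Aux

variable {k : Type*} [Field k] {e : ℕ}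

lemma degree_eq_sum_univ (d : Fin e →₀ ℕ) : Finsupp.degree d = ∑ j, d j := by
  rw [Finsupp.degree]
  exact Finset.sum_subset (Finset.subset_univ _)
    (fun x _ hx => Finsupp.notMem_support_iff.mp hx)

lemma single_add_sub {d : Fin e →₀ ℕ} {i : Fin e} (hi : d i ≠ 0) :
    Finsupp.single i 1 + (d - Finsupp.single i 1) = d := by
  ext j
  rcases eq_or_ne i j with rfl | h
  · simp only [Finsupp.add_apply, Finsupp.tsub_apply, Finsupp.single_eq_same]
    omega
  · simp [Finsupp.add_apply, Finsupp.tsub_apply, Finsupp.single_eq_of_ne' h]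

lemma degree_add (a b : Fin e →₀ ℕ) :
    Finsupp.degree (a + b) = Finsupp.degree a + Finsupp.degree b := by
  simp [degree_eq_sum_univ, Finsupp.add_apply, Finset.sum_add_distrib]

lemma degree_sub_single {d : Fin e →₀ ℕ} {i : Fin e} (hi : d i ≠ 0) :
    Finsupp.degree (d - Finsupp.single i 1) + 1 = Finsupp.degree d := by
  have h1 : Finsupp.degree (Finsupp.single i (1:ℕ)) = 1 := by
    rw [degree_eq_sum_univ]
    simp [Finsupp.single_apply]
  have h2 := degree_add (Finsupp.single i 1) (d - Finsupp.single i 1)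
  rw [single_add_sub hi, h1] at h2
  omega

lemma mem_q_iff {f : MvPolynomial (Fin e) k} :
    f ∈ qIdeal k e ↔ constantCoeff f = 0 := by
  constructor
  · intro hf
    have h : qIdeal k e ≤ RingHom.ker (constantCoeff (σ := Fin e) (R := k)) := by
      rw [qIdeal, Ideal.span_le]
      rintro _ ⟨i, rfl⟩
      simp [RingHom.mem_ker]
    exact h hf
  · intro hf
    rw [f.as_sum]
    refine Ideal.sum_mem _ (fun d hd => ?_)
    have hd0 : d ≠ 0 := by
      rintro rfl
      exact (MvPolynomial.mem_support_iff.mp hd) (by rwa [← constantCoeff_eq] )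
    obtain ⟨i, hi⟩ : ∃ i, d i ≠ 0 := by
      by_contra h
      push_neg at h
      exact hd0 (Finsupp.ext fun j => h j)
    have : monomial d (coeff d f) = monomial (d - Finsupp.single i 1) (coeff d f) * X i := by
      rw [X, monomial_mul, mul_one, add_comm, single_add_sub hi]
    rw [this]
    exact Ideal.mul_mem_left _ _ (Ideal.subset_span ⟨i, rfl⟩)

lemma qpow_coeff : ∀ (m : ℕ) {f : MvPolynomial (Fin e) k}, f ∈ qIdeal k e ^ m →
    ∀ d ∈ f.support, m ≤ Finsupp.degree d := by
  intro m
  induction m with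
  | zero => intro f _ d _; exact Nat.zero_le _
  | succ m ih =>
    intro f hf d hd
    rw [pow_succ] at hf
    have key : ∀ g ∈ (qIdeal k e ^ m) * (qIdeal k e), ∀ d ∈ MvPolynomial.support g,
        m + 1 ≤ Finsupp.degree d := by
      intro g hg
      refine Submodule.mul_induction_on hg ?_ ?_
      · intro r hr x hx d hd
        have hco : coeff d (r * x) ≠ 0 := MvPolynomial.mem_support_iff.mp hd
        rw [MvPolynomial.coeff_mul] at hco
        obtain ⟨⟨u, v⟩, huv, hne⟩ := Finset.exists_ne_zero_of_sum_ne_zero hco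
        have hu : coeff u r ≠ 0 := fun h => hne (by simp [h])
        have hv : coeff v x ≠ 0 := fun h => hne (by simp [h])
        have hur : m ≤ Finsupp.degree u := ih hr u (MvPolynomial.mem_support_iff.mpr hu)
        have hv0 : v ≠ 0 := by
          rintro rfl
          exact hv (by rw [← constantCoeff_eq]; exact mem_q_iff.mp hx)
        have hvd : 1 ≤ Finsupp.degree v := by
          rcases Nat.eq_zero_or_pos (Finsupp.degree v) with h | h
          · exact absurd ((Finsupp.degree_eq_zero_iff v).mp h) hv0
          · exact h
        have hsum : u + v = d := Finset.HasAntidiagonal.mem_antidiagonal.mp huv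
        have : Finsupp.degree u + Finsupp.degree v = Finsupp.degree d := by
          rw [← hsum, degree_eq_sum_univ, degree_eq_sum_univ, degree_eq_sum_univ,
            ← Finset.sum_add_distrib]
          exact Finset.sum_congr rfl (fun j _ => rfl)
        omega
      · intro g h hg hh d hd
        have : coeff d (g + h) ≠ 0 := MvPolynomial.mem_support_iff.mp hd
        rw [MvPolynomial.coeff_add] at this
        rcases (by by_contra hc; push_neg at hc; simp [hc.1, hc.2] at this :
            coeff d g ≠ 0 ∨ coeff d h ≠ 0) with h' | h'
        · exact hg d (MvPolynomial.mem_support_iff.mpr h')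
        · exact hh d (MvPolynomial.mem_support_iff.mpr h')
    exact key f hf d hd

lemma monomial_mem_qpow : ∀ (m : ℕ) (d : Fin e →₀ ℕ) (c : k), m ≤ Finsupp.degree d →
    monomial d c ∈ qIdeal k e ^ m := by
  intro m
  induction m with
  | zero => intro d c _; simp [Ideal.one_eq_top]
  | succ m ih =>
    intro d c hd
    obtain ⟨i, hi⟩ : ∃ i, d i ≠ 0 := by
      by_contra h
      push_neg at h
      have : d = 0 := Finsupp.ext fun j => h j
      rw [this] at hd
      simp [map_zero] at hd
    have hfac : monomial d c = monomial (d - Finsupp.single i 1) c * X i := by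
      rw [X, monomial_mul, mul_one, add_comm, single_add_sub hi]
    rw [hfac, pow_succ]
    have hdeg : m ≤ Finsupp.degree (d - Finsupp.single i 1) := by
      have := degree_sub_single (d := d) hi
      omega
    exact Ideal.mul_mem_mul (ih _ c hdeg) (Ideal.subset_span ⟨i, rfl⟩)

lemma mem_qpow_iff {m : ℕ} {f : MvPolynomial (Fin e) k} :
    f ∈ qIdeal k e ^ m ↔ ∀ d ∈ f.support, m ≤ Finsupp.degree d := by
  refine ⟨qpow_coeff m, fun h => ?_⟩
  rw [f.as_sum]
  exact Ideal.sum_mem _ (fun d hd => monomial_mem_qpow m d _ (h d hd))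


lemma degree_of_mem_homog {j : ℕ} {z : MvPolynomial (Fin e) k}
    (hz : z ∈ homogeneousSubmodule (Fin e) k j) {d : Fin e →₀ ℕ} (hd : d ∈ z.support) :
    Finsupp.degree d = j := by
  have h := (mem_homogeneousSubmodule _ _).mp hz (MvPolynomial.mem_support_iff.mp hd)
  rw [Finsupp.degree_eq_weight_one]
  exact h

lemma homog_mem_qpow {j : ℕ} {z : MvPolynomial (Fin e) k}
    (hz : z ∈ homogeneousSubmodule (Fin e) k j) : z ∈ qIdeal k e ^ j :=
  mem_qpow_iff.mpr (fun d hd => (degree_of_mem_homog hz hd).ge)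

lemma hc_eq_zero_of_mem_qpow {m j : ℕ} {f : MvPolynomial (Fin e) k}
    (hf : f ∈ qIdeal k e ^ m) (hj : j < m) : homogeneousComponent j f = 0 := by
  apply homogeneousComponent_eq_zero'
  intro d hd
  have := qpow_coeff m hf d hd
  omega

lemma tail_mem_qpow {m : ℕ} {f : MvPolynomial (Fin e) k} (hf : f ∈ qIdeal k e ^ m) :
    f - homogeneousComponent m f ∈ qIdeal k e ^ (m + 1) := by
  rw [mem_qpow_iff]
  intro d hd
  have hco : coeff d (f - homogeneousComponent m f) ≠ 0 := MvPolynomial.mem_support_iff.mp hd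
  rw [MvPolynomial.coeff_sub, coeff_homogeneousComponent] at hco
  by_cases hdm : Finsupp.degree d = m
  · simp [hdm] at hco
  · have hcf : coeff d f ≠ 0 := by
      intro h; rw [h] at hco; simp at hco
    have := qpow_coeff m hf d (MvPolynomial.mem_support_iff.mpr hcf)
    omega

/-- An ideal closed under taking homogeneous components. -/
def HCC (T : Ideal (MvPolynomial (Fin e) k)) : Prop :=
  ∀ (j : ℕ) ⦃f : MvPolynomial (Fin e) k⦄, f ∈ T → homogeneousComponent j f ∈ T

lemma HCC.inf {T T' : Ideal (MvPolynomial (Fin e) k)} (h : HCC T) (h' : HCC T') :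
    HCC (T ⊓ T') := fun j f hf => ⟨h j hf.1, h' j hf.2⟩

lemma HCC.sup {T T' : Ideal (MvPolynomial (Fin e) k)} (h : HCC T) (h' : HCC T') :
    HCC (T ⊔ T') := by
  intro j f hf
  obtain ⟨u, hu, v, hv, rfl⟩ := Submodule.mem_sup.mp hf
  rw [map_add]
  exact Submodule.add_mem_sup (h j hu) (h' j hv)

lemma HCC.qpow (m : ℕ) : HCC (qIdeal k e ^ m) := by
  intro j f hf
  rcases lt_or_ge j m with h | h
  · rw [hc_eq_zero_of_mem_qpow hf h]; exact zero_mem _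
  · exact (Ideal.pow_le_pow_right h) (homog_mem_qpow (homogeneousComponent_mem j f))




lemma HCC.ofHomog {J : Ideal (MvPolynomial (Fin e) k)}
    (hJ : ∃ S : Set (MvPolynomial (Fin e) k),
      (∀ p ∈ S, ∃ n, MvPolynomial.IsHomogeneous p n) ∧ J = Ideal.span S) : HCC J := by
  obtain ⟨S, hS, rfl⟩ := hJ
  intro j f hf
  letI := MvPolynomial.gradedAlgebra (σ := Fin e) (R := k)
  have h : Ideal.IsHomogeneous (homogeneousSubmodule (Fin e) k) (Ideal.span S) :=
    Ideal.homogeneous_span _ S (fun x hx => (hS x hx).imp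
      (fun n hn => (mem_homogeneousSubmodule _ _).mpr hn))
  have h2 := h j hf
  have h3 : (DirectSum.decompose (homogeneousSubmodule (Fin e) k) f j : MvPolynomial (Fin e) k)
      = homogeneousComponent j f := MvPolynomial.decomposition.decompose'_apply f j
  rwa [h3] at h2

lemma fdQ (i : ℕ) : FiniteDimensional k (homogeneousSubmodule (Fin e) k i) := by
  have hfin : ({d : Fin e →₀ ℕ | Finsupp.degree d ≤ i}).Finite := Finsupp.finite_of_degree_le i
  have hle : homogeneousSubmodule (Fin e) k i ≤
      Submodule.span k ((fun d => (monomial d (1:k) : MvPolynomial (Fin e) k)) ''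
        {d | Finsupp.degree d ≤ i}) := by
    intro f hf
    rw [f.as_sum]
    refine Submodule.sum_mem _ (fun d hd => ?_)
    have hdeg : Finsupp.degree d ≤ i := by
      have := (mem_homogeneousSubmodule _ _).mp hf (MvPolynomial.mem_support_iff.mp hd)
      rw [Finsupp.degree_eq_weight_one]
      exact this.le
    have heq : monomial d (coeff d f) = (coeff d f) • monomial d (1:k) := by
      simp [MvPolynomial.smul_monomial]
    rw [heq]
    exact Submodule.smul_mem _ _ (Submodule.subset_span ⟨d, hdeg, rfl⟩)
  haveI := FiniteDimensional.span_of_finite k (V := MvPolynomial (Fin e) k)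
    (hfin.image (fun d => (monomial d (1:k) : MvPolynomial (Fin e) k)))
  exact Submodule.finiteDimensional_of_le hle

/-- The degree-`i` part of `J`, as a subspace of the space of homogeneous polynomials. -/
noncomputable def piece (J : Ideal (MvPolynomial (Fin e) k)) (i : ℕ) :
    Submodule k (homogeneousSubmodule (Fin e) k i) :=
  Submodule.comap (homogeneousSubmodule (Fin e) k i).subtype (Submodule.restrictScalars k J)

lemma mem_piece {J : Ideal (MvPolynomial (Fin e) k)} {i : ℕ}
    {z : homogeneousSubmodule (Fin e) k i} : z ∈ piece J i ↔ (z : MvPolynomial (Fin e) k) ∈ J :=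
  Iff.rfl

set_option synthInstance.maxHeartbeats 1000000 in
lemma hilb_eq {J : Ideal (MvPolynomial (Fin e) k)} (hJ : HCC J) (i : ℕ) :
    hilb k e J i + Module.finrank k (piece J i)
      = Module.finrank k (homogeneousSubmodule (Fin e) k i) := by
  haveI := fdQ (k := k) (e := e) i
  set Qi := homogeneousSubmodule (Fin e) k i with hQi
  set K := qIdeal k e ^ (i+1) ⊔ J with hK
  let φ : Qi →ₗ[k] (MvPolynomial (Fin e) k ⧸ K) :=
    (Ideal.Quotient.mkₐ k K).toLinearMap.comp Qi.subtype
  have hφ : ∀ z : Qi, φ z = Ideal.Quotient.mk K (z : MvPolynomial (Fin e) k) := fun z => rfl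
  have hrange : LinearMap.range φ
      = Submodule.restrictScalars k ((qIdeal k e ^ i ⊔ J).map (Ideal.Quotient.mk K)) := by
    apply le_antisymm
    · rintro _ ⟨z, rfl⟩
      rw [hφ]
      exact Ideal.mem_map_of_mem _ (Submodule.mem_sup_left (homog_mem_qpow z.2))
    · intro w hw
      obtain ⟨f, hf, rfl⟩ := (Ideal.mem_map_iff_of_surjective _ Ideal.Quotient.mk_surjective).mp hw
      obtain ⟨g, hg, h', hh', rfl⟩ := Submodule.mem_sup.mp hf
      refine ⟨⟨homogeneousComponent i g, homogeneousComponent_mem i g⟩, ?_⟩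
      rw [hφ]
      have h1 : g - homogeneousComponent i g ∈ K :=
        Submodule.mem_sup_left (tail_mem_qpow hg)
      have h2 : h' ∈ K := Submodule.mem_sup_right hh'
      have : (g + h') - homogeneousComponent i g ∈ K := by
        have := Submodule.add_mem K h1 h2
        convert this using 1
        ring
      rw [Ideal.Quotient.mk_eq_mk_iff_sub_mem]
      simpa using (Submodule.neg_mem K this)
    
  have hker : LinearMap.ker φ = piece J i := by
    ext z
    simp only [LinearMap.mem_ker, hφ, Ideal.Quotient.eq_zero_iff_mem, mem_piece]
    constructor
    · intro h
      obtain ⟨u, hu, v, hv, huv⟩ := Submodule.mem_sup.mp h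
      have hz : homogeneousComponent i (z : MvPolynomial (Fin e) k) = z :=
        by rw [homogeneousComponent_of_mem z.2, if_pos rfl]
      have : homogeneousComponent i ((z : MvPolynomial (Fin e) k)) =
          homogeneousComponent i u + homogeneousComponent i v := by
        rw [← map_add, huv]
      rw [hz, hc_eq_zero_of_mem_qpow hu (Nat.lt_succ_self i), zero_add] at this
      have hzJ : homogeneousComponent i v ∈ J := hJ i hv
      rwa [← this] at hzJ
    · intro h
      exact Submodule.mem_sup_right h
  have hrn := LinearMap.finrank_range_add_finrank_ker φ
  rw [hrange, hker] at hrn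
  rw [hilb]
  exact hrn

lemma colon_inf (I1 I2 N : Ideal (MvPolynomial (Fin e) k)) :
    (I1 ⊓ I2).colon N = I1.colon N ⊓ I2.colon N := by
  ext r
  simp only [Submodule.mem_colon, Submodule.mem_inf]
  exact ⟨fun h => ⟨fun p hp => (h p hp).1, fun p hp => (h p hp).2⟩,
    fun h p hp => ⟨h.1 p hp, h.2 p hp⟩⟩

lemma qpow_le_colon {I : Ideal (MvPolynomial (Fin e) k)} {σ : ℕ}
    (h : qIdeal k e ^ (σ + 1) ≤ I) : qIdeal k e ^ σ ≤ I.colon (qIdeal k e) := by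
  intro z hz
  rw [Submodule.mem_colon]
  intro p hp
  rw [smul_eq_mul]
  exact h (by rw [pow_succ]; exact Ideal.mul_mem_mul hz hp)

lemma self_le_colon (I N : Ideal (MvPolynomial (Fin e) k)) : I ≤ I.colon N := by
  intro r hr
  rw [Submodule.mem_colon]
  intro p _
  rw [smul_eq_mul]
  exact Ideal.mul_mem_right p _ hr

/-- For a type-one (Gorenstein) ideal, the colon ideal is `I + q^σ`. -/
lemma colon_eq {I : Ideal (MvPolynomial (Fin e) k)} {x : MvPolynomial (Fin e) k}
    (hx : x ∉ I) (hcol : I.colon (qIdeal k e) = I ⊔ Ideal.span {x}) {σ : ℕ}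
    (h1 : ¬ qIdeal k e ^ σ ≤ I) (h2 : qIdeal k e ^ (σ + 1) ≤ I) :
    I.colon (qIdeal k e) = I ⊔ qIdeal k e ^ σ := by
  obtain ⟨t, ht, htI⟩ := SetLike.not_le_iff_exists.mp h1
  have htc : t ∈ I ⊔ Ideal.span {x} := by rw [← hcol]; exact qpow_le_colon h2 ht
  obtain ⟨w, hw, z, hz, hwz⟩ := Submodule.mem_sup.mp htc
  obtain ⟨a, rfl⟩ := Ideal.mem_span_singleton'.mp hz
  have hxc : x ∈ I.colon (qIdeal k e) := by
    rw [hcol]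
    exact Submodule.mem_sup_right (Ideal.subset_span rfl)
  have hax : (a - C (constantCoeff a)) * x ∈ I := by
    have hmem : a - C (constantCoeff a) ∈ qIdeal k e := by
      rw [mem_q_iff, map_sub, constantCoeff_C, sub_self]
    have := Submodule.mem_colon.mp hxc _ hmem
    rw [smul_eq_mul] at this
    rw [mul_comm]
    exact this
  rcases eq_or_ne (constantCoeff a) 0 with hc0 | hc0
  · exfalso
    apply htI
    have : a * x = (a - C (constantCoeff a)) * x := by rw [hc0, map_zero, sub_zero]
    rw [← hwz, this]
    exact Submodule.add_mem _ hw hax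
  · have hxmem : x ∈ I ⊔ qIdeal k e ^ σ := by
      have hcx : C (constantCoeff a) * x = t - w - (a - C (constantCoeff a)) * x := by
        rw [← hwz]; ring
      have hx2 : x = C (constantCoeff a)⁻¹ * (C (constantCoeff a) * x) := by
        rw [← mul_assoc, ← C_mul, inv_mul_cancel₀ hc0, C_1, one_mul]
      rw [hx2, hcx]
      refine Ideal.mul_mem_left _ _ ?_
      refine Submodule.sub_mem _ (Submodule.sub_mem _ ?_ ?_) ?_
      · exact Submodule.mem_sup_right ht
      · exact Submodule.mem_sup_left hw
      · exact Submodule.mem_sup_left hax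
    apply le_antisymm
    · rw [hcol]
      refine sup_le le_sup_left ?_
      rw [Ideal.span_le]
      intro y hy
      rw [Set.mem_singleton_iff.mp hy]
      exact hxmem
    · exact sup_le (self_le_colon _ _) (qpow_le_colon h2)

lemma homog_mem_of_mem_sup {T : Ideal (MvPolynomial (Fin e) k)} (hT : HCC T) {m j : ℕ}
    (hj : j < m) {z : MvPolynomial (Fin e) k} (hz : z ∈ homogeneousSubmodule (Fin e) k j)
    (h : z ∈ T ⊔ qIdeal k e ^ m) : z ∈ T := by
  obtain ⟨u, hu, v, hv, huv⟩ := Submodule.mem_sup.mp h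
  have h1 : homogeneousComponent j z = z := by rw [homogeneousComponent_of_mem hz, if_pos rfl]
  have h2 : homogeneousComponent j z = homogeneousComponent j u + homogeneousComponent j v := by
    rw [← map_add, huv]
  rw [h1, hc_eq_zero_of_mem_qpow hv hj, add_zero] at h2
  rw [h2]
  exact hT j hu

/-- The key containment for the location of the socle. -/
lemma colon_le_sup {I1 I2 : Ideal (MvPolynomial (Fin e) k)} (hcc1 : HCC I1) (hcc2 : HCC I2)
    {s1 s2 : ℕ} (hs12 : s1 ≤ s2) (hq1 : qIdeal k e ^ (s1 + 1) ≤ I1)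
    (hmid : ∀ j, s1 ≤ j → j < s2 → ∀ z ∈ homogeneousSubmodule (Fin e) k j, z ∈ I2 → z ∈ I1) :
    (I1 ⊔ qIdeal k e ^ s1) ⊓ (I2 ⊔ qIdeal k e ^ s2) ≤ (I1 ⊓ I2) ⊔ qIdeal k e ^ s2 := by
  intro f hf
  have hsum : f = ∑ j ∈ Finset.range (f.totalDegree + 1), homogeneousComponent j f :=
    (sum_homogeneousComponent f).symm
  rw [hsum]
  refine Submodule.sum_mem _ (fun j _ => ?_)
  have hz1 : homogeneousComponent j f ∈ I1 ⊔ qIdeal k e ^ s1 :=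
    (hcc1.sup (HCC.qpow s1)) j hf.1
  have hz2 : homogeneousComponent j f ∈ I2 ⊔ qIdeal k e ^ s2 :=
    (hcc2.sup (HCC.qpow s2)) j hf.2
  have hzh : homogeneousComponent j f ∈ homogeneousSubmodule (Fin e) k j :=
    homogeneousComponent_mem j f
  rcases le_or_gt s2 j with h | h
  · exact Submodule.mem_sup_right ((Ideal.pow_le_pow_right h) (homog_mem_qpow hzh))
  · have hmem2 : homogeneousComponent j f ∈ I2 := homog_mem_of_mem_sup hcc2 h hzh hz2
    rcases lt_or_ge j s1 with h' | h'
    · exact Submodule.mem_sup_left ⟨homog_mem_of_mem_sup hcc1 h' hzh hz1, hmem2⟩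
    · exact Submodule.mem_sup_left ⟨hmid j h' h _ hzh hmem2, hmem2⟩

set_option maxHeartbeats 1000000 in
set_option synthInstance.maxHeartbeats 1000000 in
/-- The socle bound coming from type two. -/
lemma socle_bound {I1 I2 : Ideal (MvPolynomial (Fin e) k)} {x y : MvPolynomial (Fin e) k}
    {m : ℕ}
    (hcol : (I1 ⊓ I2).colon (qIdeal k e) = (I1 ⊓ I2) ⊔ Ideal.span {x, y})
    (hind : ∀ a b : MvPolynomial (Fin e) k, a * x + b * y ∈ I1 ⊓ I2 →
      a ∈ qIdeal k e ∧ b ∈ qIdeal k e)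
    (hcolle : (I1 ⊓ I2).colon (qIdeal k e) ≤ (I1 ⊓ I2) ⊔ qIdeal k e ^ m)
    (hq : qIdeal k e ^ (m + 1) ≤ I1 ⊓ I2)
    (T : Ideal (MvPolynomial (Fin e) k))
    (hT : ∀ z : MvPolynomial (Fin e) k, z ∈ T → z ∈ homogeneousSubmodule (Fin e) k m →
      z ∈ I1 ⊓ I2) :
    2 + Module.finrank k (piece T m) ≤ Module.finrank k (homogeneousSubmodule (Fin e) k m) := by
  classical
  haveI := fdQ (k := k) (e := e) m
  set J := I1 ⊓ I2 with hJdef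
  let ψ : homogeneousSubmodule (Fin e) k m →ₗ[k] (MvPolynomial (Fin e) k ⧸ J) :=
    (Ideal.Quotient.mkₐ k J).toLinearMap.comp (homogeneousSubmodule (Fin e) k m).subtype
  have hψ : ∀ z : homogeneousSubmodule (Fin e) k m,
      ψ z = Ideal.Quotient.mk J (z : MvPolynomial (Fin e) k) := fun z => rfl
  -- the images of x and y are in the range of ψ
  have hpre : ∀ w : MvPolynomial (Fin e) k, w ∈ J.colon (qIdeal k e) →
      ∃ z : homogeneousSubmodule (Fin e) k m,
        ψ z = Ideal.Quotient.mk J w := by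
    intro w hw
    obtain ⟨u, hu, v, hv, huv⟩ := Submodule.mem_sup.mp (hcolle hw)
    refine ⟨⟨homogeneousComponent m v, homogeneousComponent_mem m v⟩, ?_⟩
    rw [hψ]
    have h1 : v - homogeneousComponent m v ∈ J := hq (tail_mem_qpow hv)
    have : w - homogeneousComponent m v ∈ J := by
      have := Submodule.add_mem J hu h1
      convert this using 1
      rw [← huv]; ring
    rw [Ideal.Quotient.mk_eq_mk_iff_sub_mem]
    simpa using (Submodule.neg_mem J this)
  have hxc : x ∈ J.colon (qIdeal k e) := by
    rw [hcol]
    exact Submodule.mem_sup_right (Ideal.subset_span (by simp))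
  have hyc : y ∈ J.colon (qIdeal k e) := by
    rw [hcol]
    exact Submodule.mem_sup_right (Ideal.subset_span (by simp))
  obtain ⟨zx, hzx⟩ := hpre x hxc
  obtain ⟨zy, hzy⟩ := hpre y hyc
  -- elements of the range of ψ
  let u : LinearMap.range ψ := ⟨ψ zx, LinearMap.mem_range_self ψ zx⟩
  let v : LinearMap.range ψ := ⟨ψ zy, LinearMap.mem_range_self ψ zy⟩
  have hLI : LinearIndependent k ![u, v] := by
    rw [Fintype.linearIndependent_iff]
    intro g hg
    have hg' : g 0 • (ψ zx) + g 1 • (ψ zy) = 0 := by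
      have := congrArg (Subtype.val) hg
      simpa [u, v, Fin.sum_univ_two] using this
    have esmul : ∀ (a : k) (w : MvPolynomial (Fin e) k),
        Ideal.Quotient.mk J (C a * w) = a • (Ideal.Quotient.mk J w) := by
      intro a w
      rw [← smul_eq_C_mul]
      have h := map_smul (Ideal.Quotient.mkₐ k J) a w
      rwa [Ideal.Quotient.mkₐ_eq_mk] at h
    have hmk : Ideal.Quotient.mk J (C (g 0) * x + C (g 1) * y) = 0 := by
      rw [map_add, esmul, esmul, ← hzx, ← hzy, hg']
    have hmem : C (g 0) * x + C (g 1) * y ∈ J := Ideal.Quotient.eq_zero_iff_mem.mp hmk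
    obtain ⟨hq0, hq1⟩ := hind _ _ hmem
    have h0 : g 0 = 0 := by
      have := mem_q_iff.mp hq0
      rwa [constantCoeff_C] at this
    have h1 : g 1 = 0 := by
      have := mem_q_iff.mp hq1
      rwa [constantCoeff_C] at this
    intro i
    fin_cases i <;> assumption
  haveI : FiniteDimensional k (LinearMap.range ψ) := inferInstance
  have h2le : 2 ≤ Module.finrank k (LinearMap.range ψ) := by
    have := hLI.fintype_card_le_finrank
    simpa using this
  have hkerge : piece T m ≤ LinearMap.ker ψ := by
    intro z hz
    rw [LinearMap.mem_ker, hψ, Ideal.Quotient.eq_zero_iff_mem]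
    exact hT _ (mem_piece.mp hz) z.2
  have hker : Module.finrank k (piece T m) ≤ Module.finrank k (LinearMap.ker ψ) :=
    Submodule.finrank_mono hkerge
  have hrn := LinearMap.finrank_range_add_finrank_ker ψ
  omega

lemma qsq_le {I : Ideal (MvPolynomial (Fin e) k)} {s1 : ℕ} (hs : 2 ≤ s1)
    (htop : qIdeal k e ^ (s1 + 1) ≤ I)
    (hp : ∀ j, 2 ≤ j → j ≤ s1 → ∀ z ∈ homogeneousSubmodule (Fin e) k j, z ∈ I) :
    qIdeal k e ^ 2 ≤ I := by
  intro f hf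
  have hsum : f = ∑ j ∈ Finset.range (f.totalDegree + 1), homogeneousComponent j f :=
    (sum_homogeneousComponent f).symm
  rw [hsum]
  refine Submodule.sum_mem _ (fun j _ => ?_)
  rcases lt_or_ge j 2 with h | h
  · rw [hc_eq_zero_of_mem_qpow hf h]
    exact zero_mem _
  rcases le_or_gt j s1 with h' | h'
  · exact hp j h h' _ (homogeneousComponent_mem j f)
  · exact htop ((Ideal.pow_le_pow_right (by omega))
      (homog_mem_qpow (homogeneousComponent_mem j f)))

lemma piece_inf (I1 I2 : Ideal (MvPolynomial (Fin e) k)) (i : ℕ) :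
    piece (I1 ⊓ I2) i = piece I1 i ⊓ piece I2 i := by
  ext z
  simp only [mem_piece, Submodule.mem_inf]

lemma mem_sup_of_piece_sup_top {I1 I2 : Ideal (MvPolynomial (Fin e) k)} {i : ℕ}
    (h : piece I1 i ⊔ piece I2 i = ⊤) {z : MvPolynomial (Fin e) k}
    (hz : z ∈ homogeneousSubmodule (Fin e) k i) : z ∈ I1 ⊔ I2 := by
  have hmem : (⟨z, hz⟩ : homogeneousSubmodule (Fin e) k i) ∈ piece I1 i ⊔ piece I2 i := by
    rw [h]; trivial
  obtain ⟨a, ha, b, hb, hab⟩ := Submodule.mem_sup.mp hmem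
  have : z = (a : MvPolynomial (Fin e) k) + (b : MvPolynomial (Fin e) k) := by
    have := congrArg (Subtype.val) hab
    simpa using this.symm
  rw [this]
  exact Submodule.add_mem_sup (mem_piece.mp ha) (mem_piece.mp hb)

/-! Numeric lemmas -/

lemma hQ_zero : hQ e 0 = 1 := by simp [hQ, Nat.choose_self]

lemma hQ_pos (i : ℕ) : 1 ≤ hQ e i := Nat.choose_pos (by omega)

lemma hQ_one (he : 3 ≤ e) : hQ e 1 = e := by
  unfold hQ
  rw [show e - 1 + 1 = e by omega]
  have h := Nat.choose_symm (n := e) (k := 1) (by omega)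
  rw [h, Nat.choose_one_right]

lemma hQ_two (he : 3 ≤ e) : 2 * e ≤ hQ e 2 := by
  unfold hQ
  rw [show e - 1 + 2 = e + 1 by omega]
  have h : Nat.choose (e + 1) (e - 1) = Nat.choose (e + 1) 2 := by
    have h2 := Nat.choose_symm (n := e + 1) (k := 2) (by omega)
    rw [show e + 1 - 2 = e - 1 by omega] at h2
    exact h2
  rw [h, Nat.choose_two_right, show e + 1 - 1 = e by omega]
  have h4 : 2 * e * 2 ≤ (e + 1) * e := by nlinarith
  omega

lemma hQ_three (he : 3 ≤ e) : 2 ≤ hQ e 3 := by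
  unfold hQ
  rw [show e - 1 + 3 = e + 2 by omega]
  have h : Nat.choose (e + 2) (e - 1) = Nat.choose (e + 2) 3 := by
    have h2 := Nat.choose_symm (n := e + 2) (k := 3) (by omega)
    rw [show e + 2 - 3 = e - 1 by omega] at h2
    exact h2
  rw [h]
  have h5 : Nat.choose 5 3 ≤ Nat.choose (e + 2) 3 := Nat.choose_le_choose 3 (by omega)
  have : Nat.choose 5 3 = 10 := by decide
  omega

lemma hQat_self (σ : ℕ) : hQat e σ σ = 1 := by
  simp [hQat, hQ_zero]

lemma hQat_gt {σ i : ℕ} (h : σ < i) : hQat e σ i = 0 := by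
  simp [hQat, Nat.not_le.mpr h]

end Stmt14Aux

open Stmt14Aux

/-- In the setup of two homogeneous compressed Gorenstein
ideals `I1, I2` in `e ≥ 3` variables with `R = Q/(I1 ∩ I2)` compressed of type
2: if the socle degrees satisfy `s1 = 2`, or `s1 = 3 = s2`, then
`Q/(I1 + I2) = Q/q^2`, i.e. `I1 + I2 = q^2`. -/
theorem stmt14 (k : Type*) [Field k] (e : ℕ) (he : 3 ≤ e)
    (I1 I2 : Ideal (MvPolynomial (Fin e) k))
    (h1hom : IsHomogeneousIdeal k e I1) (h2hom : IsHomogeneousIdeal k e I2)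
    (h1p : I1.IsPrimary) (h1r : I1.radical = qIdeal k e)
    (h2p : I2.IsPrimary) (h2r : I2.radical = qIdeal k e)
    (h1q2 : I1 ≤ qIdeal k e ^ 2) (h2q2 : I2 ≤ qIdeal k e ^ 2)
    (h1gor : HasTypeOne k e I1) (h2gor : HasTypeOne k e I2)
    (s1 s2 s : ℕ)
    (hs1 : SocDeg k e I1 s1) (hs2 : SocDeg k e I2 s2) (hle : s1 ≤ s2)
    (h1c : CompressedGor k e I1 s1) (h2c : CompressedGor k e I2 s2)
    (htype2 : HasTypeTwo k e (I1 ⊓ I2))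
    (hs : SocDeg k e (I1 ⊓ I2) s)
    -- `R` is compressed
    (hcomp : ∃ b ≤ s, ∀ i,
      hilb k e (I1 ⊓ I2) i = min (hQ e i) (hQat e b i + hQat e s i))
    (hcase : s1 = 2 ∨ (s1 = 3 ∧ s2 = 3)) :
    I1 + I2 = qIdeal k e ^ 2 := by
  classical
  obtain ⟨x1, hx1, hcol1⟩ := h1gor
  obtain ⟨x2, hx2, hcol2⟩ := h2gor
  obtain ⟨x, y, hxy, hind⟩ := htype2
  have hcc1 : HCC I1 := HCC.ofHomog h1hom
  have hcc2 : HCC I2 := HCC.ofHomog h2hom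
  have hccJ : HCC (I1 ⊓ I2) := hcc1.inf hcc2
  have hs12 : 2 ≤ s1 := by rcases hcase with h | ⟨h, _⟩ <;> omega
  have hcolon1 : I1.colon (qIdeal k e) = I1 ⊔ qIdeal k e ^ s1 := colon_eq hx1 hcol1 hs1.1 hs1.2
  have hcolon2 : I2.colon (qIdeal k e) = I2 ⊔ qIdeal k e ^ s2 := colon_eq hx2 hcol2 hs2.1 hs2.2
  have hq12 : qIdeal k e ^ (s2 + 1) ≤ I1 ⊓ I2 :=
    le_inf (le_trans (Ideal.pow_le_pow_right (by omega)) hs1.2) hs2.2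
  have hcolJ : (I1 ⊓ I2).colon (qIdeal k e)
      = (I1 ⊔ qIdeal k e ^ s1) ⊓ (I2 ⊔ qIdeal k e ^ s2) := by
    rw [colon_inf, hcolon1, hcolon2]
  have hpieces : ∀ j, 2 ≤ j → j ≤ s1 → ∀ z ∈ homogeneousSubmodule (Fin e) k j,
      z ∈ I1 ⊔ I2 := by
    rcases hcase with hs1eq | ⟨hs1eq, hs2eq⟩
    · -- Case `s1 = 2`.
      subst hs1eq
      intro j hj2 hjs z hz
      have hj : j = 2 := le_antisymm hjs hj2
      subst hj
      haveI := fdQ (k := k) (e := e) 2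
      have hval1 : hilb k e I1 2 = 1 := by
        have h := h1c 2
        rw [hQat_self] at h
        have := hQ_pos (e := e) 2
        omega
      have hval2 : hilb k e I2 s2 = 1 := by
        have h := h2c s2
        rw [hQat_self] at h
        have := hQ_pos (e := e) s2
        omega
      have hnotBA : ¬ (∀ w ∈ homogeneousSubmodule (Fin e) k 2, w ∈ I2 → w ∈ I1) := by
        intro hBA
        have hcolle : (I1 ⊓ I2).colon (qIdeal k e) ≤ (I1 ⊓ I2) ⊔ qIdeal k e ^ s2 := by
          rw [hcolJ]
          refine colon_le_sup hcc1 hcc2 hle hs1.2 ?_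
          intro j' h2j hj's2 w hw hwI2
          rcases eq_or_lt_of_le h2j with rfl | h
          · exact hBA w hw hwI2
          · exact hs1.2 ((Ideal.pow_le_pow_right (by omega)) (homog_mem_qpow hw))
        have hT : ∀ zz : MvPolynomial (Fin e) k, zz ∈ I2 →
            zz ∈ homogeneousSubmodule (Fin e) k s2 → zz ∈ I1 ⊓ I2 := by
          intro zz hzz hzzh
          refine ⟨?_, hzz⟩
          rcases eq_or_lt_of_le hle with rfl | h
          · exact hBA zz hzzh hzz
          · exact hs1.2 ((Ideal.pow_le_pow_right (by omega)) (homog_mem_qpow hzzh))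
        have hbound := socle_bound hxy hind hcolle hq12 I2 hT
        have heq2 := hilb_eq hcc2 s2
        omega
      push_neg at hnotBA
      obtain ⟨w0, hw0h, hw0I2, hw0nI1⟩ := hnotBA
      have heq1 := hilb_eq hcc1 2
      have hlt : piece I1 2 < piece I1 2 ⊔ piece I2 2 := by
        refine lt_of_le_of_ne le_sup_left (fun hcontra => ?_)
        have hmem : (⟨w0, hw0h⟩ : homogeneousSubmodule (Fin e) k 2)
            ∈ piece I1 2 ⊔ piece I2 2 :=
          Submodule.mem_sup_right (mem_piece.mpr hw0I2)
        rw [← hcontra] at hmem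
        exact hw0nI1 (mem_piece.mp hmem)
      have hfr := Submodule.finrank_lt_finrank_of_lt hlt
      have hle2 : Module.finrank k ((piece I1 2 ⊔ piece I2 2 :
            Submodule k (homogeneousSubmodule (Fin e) k 2)))
          ≤ Module.finrank k (homogeneousSubmodule (Fin e) k 2) := Submodule.finrank_le _
      have htop : piece I1 2 ⊔ piece I2 2 = ⊤ := Submodule.eq_top_of_finrank_eq (by omega)
      exact mem_sup_of_piece_sup_top htop hz
    · -- Case `s1 = s2 = 3`.
      subst hs1eq
      subst hs2eq
      haveI := fdQ (k := k) (e := e) 2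
      haveI := fdQ (k := k) (e := e) 3
      have hseq : s = 3 := by
        by_contra hne
        rcases lt_or_gt_of_ne hne with h | h
        · exact hs2.1 (le_trans (Ideal.pow_le_pow_right (by omega))
            (le_trans hs.2 inf_le_right))
        · exact hs.1 (le_trans (Ideal.pow_le_pow_right (by omega)) hq12)
      subst hseq
      obtain ⟨b, hb3, hJc⟩ := hcomp
      have hcolle : (I1 ⊓ I2).colon (qIdeal k e) ≤ (I1 ⊓ I2) ⊔ qIdeal k e ^ 3 := by
        rw [hcolJ]
        refine colon_le_sup hcc1 hcc2 le_rfl hs1.2 ?_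
        intro j' ha hb
        exact absurd (ha.trans_lt hb) (lt_irrefl _)
      have hbound := socle_bound hxy hind hcolle hq12 (I1 ⊓ I2) (fun zz hzz _ => hzz)
      have hJ3 := hilb_eq hccJ 3
      have hJ3ge : 2 ≤ hilb k e (I1 ⊓ I2) 3 := by omega
      have hb3' : b = 3 := by
        by_contra hbne
        have hblt : b < 3 := by omega
        have h := hJc 3
        rw [hQat_gt hblt, hQat_self] at h
        have := hQ_pos (e := e) 3
        omega
      subst hb3'
      have hJ3val : hilb k e (I1 ⊓ I2) 3 = 2 := by
        have h := hJc 3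
        simp only [hQat_self] at h
        have := hQ_three he
        omega
      have hQat32 : hQat e 3 2 = e := by
        simp [hQat, hQ_one he]
      have h12 : hilb k e I1 2 = e := by
        have h := h1c 2
        rw [hQat32] at h
        have := hQ_two he
        omega
      have h22 : hilb k e I2 2 = e := by
        have h := h2c 2
        rw [hQat32] at h
        have := hQ_two he
        omega
      have h13 : hilb k e I1 3 = 1 := by
        have h := h1c 3
        rw [hQat_self] at h
        have := hQ_pos (e := e) 3
        omega
      have h23 : hilb k e I2 3 = 1 := by
        have h := h2c 3
        rw [hQat_self] at h
        have := hQ_pos (e := e) 3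
        omega
      have hJ2val : hilb k e (I1 ⊓ I2) 2 = 2 * e := by
        have h := hJc 2
        rw [hQat32] at h
        have := hQ_two he
        omega
      intro j hj2 hjs z hz
      have heqA2 := hilb_eq hcc1 2
      have heqB2 := hilb_eq hcc2 2
      have heqA3 := hilb_eq hcc1 3
      have heqB3 := hilb_eq hcc2 3
      have heqJ2 := hilb_eq hccJ 2
      have hsupinf2 := Submodule.finrank_sup_add_finrank_inf_eq (piece I1 2) (piece I2 2)
      have hsupinf3 := Submodule.finrank_sup_add_finrank_inf_eq (piece I1 3) (piece I2 3)
      rw [← piece_inf] at hsupinf2 hsupinf3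
      have hles2 : Module.finrank k ((piece I1 2 ⊔ piece I2 2 :
            Submodule k (homogeneousSubmodule (Fin e) k 2)))
          ≤ Module.finrank k (homogeneousSubmodule (Fin e) k 2) := Submodule.finrank_le _
      have hles3 : Module.finrank k ((piece I1 3 ⊔ piece I2 3 :
            Submodule k (homogeneousSubmodule (Fin e) k 3)))
          ≤ Module.finrank k (homogeneousSubmodule (Fin e) k 3) := Submodule.finrank_le _
      rcases (by omega : j = 2 ∨ j = 3) with rfl | rfl
      · have htop : piece I1 2 ⊔ piece I2 2 = ⊤ := Submodule.eq_top_of_finrank_eq (by omega)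
        exact mem_sup_of_piece_sup_top htop hz
      · have htop : piece I1 3 ⊔ piece I2 3 = ⊤ := Submodule.eq_top_of_finrank_eq (by omega)
        exact mem_sup_of_piece_sup_top htop hz
  rw [Submodule.add_eq_sup]
  refine le_antisymm (sup_le h1q2 h2q2) ?_
  exact qsq_le hs12 (le_trans hs1.2 le_sup_left) hpieces
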